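/- arXiv:2504.09492 — 3 statements merged into one kernel-verified Lean document; each statement's English description precedes it below -/
import Mathlib

section
/- Let m ≥ 1 be an integer and σ ∈ (0, 1). Let θ_1, …, θ_m ∈ (−1, 1) and w_1, …, w_m > 0 be nodes and weights of a quadrature rule on [−1,1] that is exact on polynomials of degree at most 2m − 1. Let g : (0, 1] → ℝ be 2m times continuously differentiable on (0,1], and suppose there is C > 0 with |g(y)| ≤ C·y^{−σ} and |g^{(2m)}(y)| ≤ C·y^{−σ−2m} for all y ∈ (0,1]. Set s := (2m+1)/(1−σ) and, for an integer L ≥ 1, h_q := (q/L)^s, Δh_q := h_q − h_{q−1}, and θ_k^q := (Δh_q/2)·θ_k + (h_q + h_{q−1})/2. Then there exists a constant C′ > 0, depending only on m, σ, C and the quadrature rule (not on L), such that for every L ≥ 1: | ∫_0^1 g(y) dy − Σ_{q=1}^{L} Σ_{k=1}^{m} w_k · (Δh_q/2) · g(θ_k^q) | ≤ C′ · L^{−2m}. -/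
open Set MeasureTheory intervalIntegral Polynomial

lemma quad_scaled {m : ℕ} (θ w : Fin m → ℝ)
    (hexact : ∀ p : Polynomial ℝ, p.natDegree ≤ 2 * m - 1 →
      ∑ k, w k * p.eval (θ k) = ∫ t in (-1:ℝ)..1, p.eval t)
    (P : Polynomial ℝ) (hP : P.natDegree ≤ 2 * m - 1) {a b : ℝ} (hab : a < b) :
    ∑ k, w k * (((b - a)/2) * P.eval (((b - a)/2) * θ k + (a + b)/2)) = ∫ y in a..b, P.eval y := by
  set β := (b - a)/2 with hβdef
  set α := (a + b)/2 with hαdef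
  have hβ : β ≠ 0 := by
    have : 0 < β := by rw [hβdef]; linarith
    exact this.ne'
  have hQ := hexact (P.comp (Polynomial.C β * Polynomial.X + Polynomial.C α)) ?deg
  case deg =>
    rw [Polynomial.natDegree_comp, Polynomial.natDegree_linear hβ, mul_one]
    exact hP
  have hev : ∀ t : ℝ, (P.comp (Polynomial.C β * Polynomial.X + Polynomial.C α)).eval t
      = P.eval (β * t + α) := by
    intro t; simp [Polynomial.eval_comp]
  simp only [hev] at hQ
  have hint : (∫ t in (-1:ℝ)..1, P.eval (β * t + α)) = β⁻¹ • ∫ y in a..b, P.eval y := by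
    rw [intervalIntegral.integral_comp_mul_add (fun y => P.eval y) hβ α]
    have h1 : β * (-1) + α = a := by rw [hβdef, hαdef]; ring
    have h2 : β * 1 + α = b := by rw [hβdef, hαdef]; ring
    rw [h1, h2]
  rw [hint, smul_eq_mul] at hQ
  have : β * ∑ x : Fin m, w x * eval (β * θ x + α) P = ∫ (y : ℝ) in a..b, eval y P := by
    rw [hQ, ← mul_assoc, mul_inv_cancel₀ hβ, one_mul]
  rw [← this, Finset.mul_sum]
  apply Finset.sum_congr rfl
  intro k _
  ring

lemma quad_wsum {m : ℕ} (θ w : Fin m → ℝ)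
    (hexact : ∀ p : Polynomial ℝ, p.natDegree ≤ 2 * m - 1 →
      ∑ k, w k * p.eval (θ k) = ∫ t in (-1:ℝ)..1, p.eval t) :
    ∑ k, w k = 2 := by
  have h := hexact 1 (by simp)
  simpa using h.trans (by norm_num)

lemma iteratedDerivWithin_inter' {n : ℕ} {f : ℝ → ℝ} {s u : Set ℝ} {x : ℝ} (hu : u ∈ nhds x) :
    iteratedDerivWithin n f (s ∩ u) x = iteratedDerivWithin n f s x := by
  simp only [iteratedDerivWithin, iteratedFDerivWithin_inter hu]

-- derivative bound transfer from Ioc 0 1 to Icc a b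
lemma deriv_bound_transfer {n : ℕ} {g : ℝ → ℝ} {C σ' : ℝ} (hC : 0 < C)
    (hg : ContDiffOn ℝ n g (Set.Ioc 0 1))
    (hd : ∀ y ∈ Set.Ioc (0:ℝ) 1, |iteratedDerivWithin n g (Set.Ioc 0 1) y| ≤ C * y ^ σ')
    (hσ' : σ' ≤ 0)
    {a b : ℝ} (ha : 0 < a) (hab : a < b) (hb : b ≤ 1) :
    ∀ y ∈ Set.Icc a b, ‖iteratedDerivWithin n g (Set.Icc a b) y‖ ≤ C * a ^ σ' := by
  have hsub : Set.Icc a b ⊆ Set.Ioc 0 1 := fun y hy => ⟨lt_of_lt_of_le ha hy.1, le_trans hy.2 hb⟩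
  -- equality on the open interval
  have heq : ∀ y ∈ Set.Ioo a b,
      iteratedDerivWithin n g (Set.Icc a b) y = iteratedDerivWithin n g (Set.Ioc 0 1) y := by
    intro y hy
    have h1 : Set.Ioc (0:ℝ) 1 ∩ Set.Ioo a b = Set.Ioo a b := by
      rw [Set.inter_eq_right]
      exact fun z hz => hsub ⟨hz.1.le, hz.2.le⟩
    have h2 : Set.Icc a b ∩ Set.Ioo a b = Set.Ioo a b := by
      rw [Set.inter_eq_right]; exact Set.Ioo_subset_Icc_self
    have hmem : Set.Ioo a b ∈ nhds y := (isOpen_Ioo).mem_nhds hy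
    rw [← iteratedDerivWithin_inter' (n := n) (f := g) (s := Set.Icc a b) hmem,
      ← iteratedDerivWithin_inter' (n := n) (f := g) (s := Set.Ioc 0 1) hmem, h1, h2]
  -- bound on the open interval
  have hM : ∀ y ∈ Set.Ioo a b, ‖iteratedDerivWithin n g (Set.Icc a b) y‖ ≤ C * a ^ σ' := by
    intro y hy
    rw [heq y hy, Real.norm_eq_abs]
    refine le_trans (hd y (hsub (Set.Ioo_subset_Icc_self hy))) ?_
    have : y ^ σ' ≤ a ^ σ' := Real.rpow_le_rpow_of_nonpos ha hy.1.le hσ'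
    nlinarith [Real.rpow_pos_of_pos ha σ']
  -- continuity
  have hcont : ContinuousOn (iteratedDerivWithin n g (Set.Icc a b)) (Set.Icc a b) :=
    (hg.mono hsub).continuousOn_iteratedDerivWithin le_rfl (uniqueDiffOn_Icc hab)
  intro y hy
  have hyc : y ∈ closure (Set.Ioo a b) := by
    rwa [closure_Ioo hab.ne]
  have hne : (nhdsWithin y (Set.Ioo a b)).NeBot := mem_closure_iff_nhdsWithin_neBot.mp hyc
  have htend : Filter.Tendsto (fun z => ‖iteratedDerivWithin n g (Set.Icc a b) z‖)
      (nhdsWithin y (Set.Ioo a b)) (nhds ‖iteratedDerivWithin n g (Set.Icc a b) y‖) := by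
    have := (hcont y hy).norm
    exact this.mono_left (nhdsWithin_mono y Set.Ioo_subset_Icc_self)
  exact le_of_tendsto htend (Filter.eventually_of_mem self_mem_nhdsWithin hM)

lemma single_interval_error {m : ℕ} (hm : 1 ≤ m) (θ w : Fin m → ℝ)
    (hθ : ∀ k, θ k ∈ Set.Ioo (-1 : ℝ) 1) (hw : ∀ k, 0 < w k)
    (hexact : ∀ p : Polynomial ℝ, p.natDegree ≤ 2 * m - 1 →
      ∑ k, w k * p.eval (θ k) = ∫ t in (-1:ℝ)..1, p.eval t)
    {g : ℝ → ℝ} {C σ : ℝ} (hC : 0 < C) (hσ : 0 ≤ σ)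
    (hg : ContDiffOn ℝ (2 * m) g (Set.Ioc 0 1))
    (hd : ∀ y ∈ Set.Ioc (0:ℝ) 1,
      |iteratedDerivWithin (2 * m) g (Set.Ioc 0 1) y| ≤ C * y ^ (-σ - 2 * m))
    {a b : ℝ} (ha : 0 < a) (hab : a < b) (hb : b ≤ 1) :
    |(∫ y in a..b, g y) - ∑ k, w k * (((b - a)/2) * g (((b - a)/2) * θ k + (a + b)/2))|
      ≤ 2 * (C * a ^ (-σ - 2 * m)) * (b - a) ^ (2 * m + 1) / ((2 * m - 1).factorial : ℝ) := by
  have hsub : Set.Icc a b ⊆ Set.Ioc 0 1 := fun y hy => ⟨lt_of_lt_of_le ha hy.1, le_trans hy.2 hb⟩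
  set M : ℝ := C * a ^ (-σ - 2 * m) with hMdef
  have hM0 : 0 < M := mul_pos hC (Real.rpow_pos_of_pos ha _)
  set nn : ℕ := 2 * m - 1 with hnn
  have hnn1 : nn + 1 = 2 * m := by omega
  have hgI : ContDiffOn ℝ (2 * m) g (Set.Icc a b) := hg.mono hsub
  have hmr : (0:ℝ) ≤ (m:ℝ) := Nat.cast_nonneg m
  have hdI : ∀ y ∈ Set.Icc a b, ‖iteratedDerivWithin (2 * m) g (Set.Icc a b) y‖ ≤ M :=
    deriv_bound_transfer hC hg hd (by linarith) ha hab hb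
  set P : Polynomial ℝ := ∑ i ∈ Finset.range (nn + 1),
      Polynomial.C (((Nat.factorial i : ℝ))⁻¹ * iteratedDerivWithin i g (Set.Icc a b) a) *
        (Polynomial.X - Polynomial.C a) ^ i with hPdef
  have hPeval : ∀ x : ℝ, P.eval x = taylorWithinEval g nn (Set.Icc a b) a x := by
    intro x
    rw [taylor_within_apply, hPdef, Polynomial.eval_finset_sum]
    refine Finset.sum_congr rfl fun i _ => ?_
    simp [smul_eq_mul]
    ring
  have hPdeg : P.natDegree ≤ 2 * m - 1 := by
    rw [hPdef]
    refine le_trans (Polynomial.natDegree_sum_le _ _) ?_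
    rw [Finset.fold_max_le]
    refine ⟨by omega, fun i hi => ?_⟩
    refine le_trans (Polynomial.natDegree_C_mul_le _ _) ?_
    rw [Polynomial.natDegree_pow, Polynomial.natDegree_X_sub_C, mul_one]
    exact Nat.lt_succ_iff.mp (Finset.mem_range.mp hi)
  set R : ℝ := M * (b - a) ^ (2 * m) / ((nn.factorial : ℝ)) with hRdef
  have hfacpos : (0:ℝ) < (nn.factorial : ℝ) := by positivity
  have hR0 : 0 ≤ R := div_nonneg (mul_nonneg hM0.le (pow_nonneg (by linarith) _)) hfacpos.le
  have hrem : ∀ x ∈ Set.Icc a b, |g x - P.eval x| ≤ R := by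
    intro x hx
    rw [hPeval x]
    have hgI' : ContDiffOn ℝ (nn + 1) g (Set.Icc a b) := hgI.of_le (by norm_cast; omega)
    have hdI' : ∀ y ∈ Set.Icc a b, ‖iteratedDerivWithin (nn + 1) g (Set.Icc a b) y‖ ≤ M := by
      rw [hnn1]; exact hdI
    have hbd := taylor_mean_remainder_bound hab.le hgI' hx hdI'
    rw [Real.norm_eq_abs] at hbd
    refine le_trans hbd ?_
    rw [hRdef, hnn1]
    have hxa : (0:ℝ) ≤ x - a := by linarith [hx.1]
    have hxb : x - a ≤ b - a := by linarith [hx.2]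
    gcongr
  -- exactness for P
  have hPex := quad_scaled θ w hexact P hPdeg hab
  -- integrability
  have hgcont : ContinuousOn g (Set.Icc a b) := hgI.continuousOn
  have hgint : IntervalIntegrable g volume a b := by
    apply ContinuousOn.intervalIntegrable
    rwa [Set.uIcc_of_le hab.le]
  have hPint : IntervalIntegrable (fun y => P.eval y) volume a b :=
    (Polynomial.continuous_aeval P).continuousOn.intervalIntegrable
  -- node membership
  have hnode : ∀ k : Fin m, ((b - a)/2) * θ k + (a + b)/2 ∈ Set.Icc a b := by
    intro k
    obtain ⟨h1, h2⟩ := hθ k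
    constructor <;> nlinarith
  -- split the error
  have hwsum : ∑ k, w k = 2 := quad_wsum θ w hexact
  have key : (∫ y in a..b, g y) - ∑ k, w k * (((b - a)/2) * g (((b - a)/2) * θ k + (a + b)/2))
      = (∫ y in a..b, (g y - P.eval y))
        - ∑ k, w k * (((b - a)/2) * (g (((b - a)/2) * θ k + (a + b)/2)
            - P.eval (((b - a)/2) * θ k + (a + b)/2))) := by
    have hsplit : ∑ k, w k * (((b - a)/2) * (g (((b - a)/2) * θ k + (a + b)/2)
          - P.eval (((b - a)/2) * θ k + (a + b)/2)))
        = (∑ k, w k * (((b - a)/2) * g (((b - a)/2) * θ k + (a + b)/2)))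
          - ∑ k, w k * (((b - a)/2) * P.eval (((b - a)/2) * θ k + (a + b)/2)) := by
      rw [← Finset.sum_sub_distrib]
      exact Finset.sum_congr rfl fun k _ => by ring
    rw [intervalIntegral.integral_sub hgint hPint, hsplit, ← hPex]
    ring
  rw [key]
  have hb1 : |∫ y in a..b, (g y - P.eval y)| ≤ R * (b - a) := by
    have := intervalIntegral.norm_integral_le_of_norm_le_const
      (C := R) (f := fun y => g y - P.eval y) (a := a) (b := b) ?bd
    case bd =>
      intro x hx
      rw [Set.uIoc_of_le hab.le] at hx
      exact hrem x ⟨hx.1.le, hx.2⟩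
    rw [Real.norm_eq_abs] at this
    refine le_trans this ?_
    rw [abs_of_pos (by linarith)]
  have hb2 : |∑ k, w k * (((b - a)/2) * (g (((b - a)/2) * θ k + (a + b)/2)
      - P.eval (((b - a)/2) * θ k + (a + b)/2)))| ≤ R * (b - a) := by
    refine le_trans (Finset.abs_sum_le_sum_abs _ _) ?_
    have : ∀ k : Fin m, |w k * (((b - a)/2) * (g (((b - a)/2) * θ k + (a + b)/2)
        - P.eval (((b - a)/2) * θ k + (a + b)/2)))| ≤ w k * (((b - a)/2) * R) := by
      intro k
      rw [abs_mul, abs_mul, abs_of_pos (hw k), abs_of_pos (by linarith : (0:ℝ) < (b - a)/2)]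
      have := hrem _ (hnode k)
      have hwk := (hw k).le
      have hba2 : (0:ℝ) ≤ (b-a)/2 := by linarith
      gcongr
    refine le_trans (Finset.sum_le_sum fun k _ => this k) ?_
    rw [← Finset.sum_mul, hwsum]
    nlinarith [hR0, hab]
  calc |(∫ y in a..b, (g y - P.eval y))
        - ∑ k, w k * (((b - a)/2) * (g (((b - a)/2) * θ k + (a + b)/2)
            - P.eval (((b - a)/2) * θ k + (a + b)/2)))|
      ≤ R * (b - a) + R * (b - a) := by
        refine le_trans (abs_sub _ _) (by linarith)
    _ ≤ 2 * M * (b - a) ^ (2 * m + 1) / (nn.factorial : ℝ) := by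
        rw [hRdef]
        rw [div_mul_eq_mul_div, pow_succ]
        rw [← add_div, div_le_div_iff₀ hfacpos hfacpos]
        ring_nf
        nlinarith [hfacpos, hM0, pow_nonneg (by linarith : (0:ℝ) ≤ b - a) (2*m)]
    _ = 2 * (C * a ^ (-σ - 2 * m)) * (b - a) ^ (2 * m + 1) / (nn.factorial : ℝ) := by
        rw [hMdef]

lemma rpow_diff_le {s x : ℝ} (hs : 1 ≤ s) (hx : 1 ≤ x) :
    x ^ s - (x - 1) ^ s ≤ s * x ^ (s - 1) := by
  have hx0 : (0:ℝ) ≤ x - 1 := by linarith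
  have hlt : x - 1 < x := by linarith
  have hderiv : ∀ y : ℝ, HasDerivAt (fun t : ℝ => t ^ s) (s * y ^ (s - 1)) y := by
    intro y
    exact Real.hasDerivAt_rpow_const (Or.inr hs)
  obtain ⟨c, hc, hceq⟩ := exists_hasDerivAt_eq_slope (fun t : ℝ => t ^ s)
    (fun y => s * y ^ (s - 1)) hlt
    (fun y _ => (hderiv y).continuousAt.continuousWithinAt)
    (fun y _ => hderiv y)
  have hslope : (x ^ s - (x - 1) ^ s) / (x - (x - 1)) = x ^ s - (x - 1) ^ s := by
    norm_num
  rw [hslope] at hceq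
  rw [← hceq]
  have hc0 : 0 ≤ c := le_trans hx0 hc.1.le
  have : c ^ (s - 1) ≤ x ^ (s - 1) :=
    Real.rpow_le_rpow hc0 hc.2.le (by linarith)
  nlinarith [this, hs]

lemma first_interval_bound {m : ℕ} (θ w : Fin m → ℝ)
    (hθ : ∀ k, θ k ∈ Set.Ioo (-1 : ℝ) 1) (hw : ∀ k, 0 < w k)
    {g : ℝ → ℝ} {C σ : ℝ} (hC : 0 < C) (hσ0 : 0 < σ) (hσ1 : σ < 1)
    (hg : ContDiffOn ℝ (2 * m) g (Set.Ioc 0 1))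
    (hgb : ∀ y ∈ Set.Ioc (0:ℝ) 1, |g y| ≤ C * y ^ (-σ))
    {h₁ : ℝ} (hh₁ : 0 < h₁) (hh₁1 : h₁ ≤ 1)
    (hgint : IntervalIntegrable g volume 0 h₁) :
    |(∫ y in (0:ℝ)..h₁, g y) - ∑ k, w k * ((h₁/2) * g ((h₁/2) * θ k + h₁/2))|
      ≤ C * (1/(1-σ) + ∑ k, w k * (1 + θ k) ^ (-σ)) * h₁ ^ (1 - σ) := by
  have h1σ : 0 < 1 - σ := by linarith
  have hbint : IntervalIntegrable (fun y => C * y ^ (-σ)) volume 0 h₁ :=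
    (intervalIntegrable_rpow' (by linarith)).const_mul C
  -- bound on the integral
  have hInt : |∫ y in (0:ℝ)..h₁, g y| ≤ C * h₁ ^ (1 - σ) / (1 - σ) := by
    have habs : |∫ y in (0:ℝ)..h₁, g y| ≤ ∫ y in (0:ℝ)..h₁, |g y| :=
      intervalIntegral.abs_integral_le_integral_abs hh₁.le
    have hmono : (∫ y in (0:ℝ)..h₁, |g y|) ≤ ∫ y in (0:ℝ)..h₁, C * y ^ (-σ) := by
      apply intervalIntegral.integral_mono_ae_restrict hh₁.le hgint.abs hbint
      refine (MeasureTheory.ae_restrict_iff' measurableSet_Icc).mpr ?_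
      have h0 : ∀ᵐ y : ℝ, y ≠ (0:ℝ) := by
        rw [MeasureTheory.ae_iff]
        simpa using Real.volume_singleton
      filter_upwards [h0] with y hy0 hy
      exact hgb y ⟨lt_of_le_of_ne hy.1 (Ne.symm hy0), hy.2.trans hh₁1⟩
    have hval : (∫ y in (0:ℝ)..h₁, C * y ^ (-σ)) = C * h₁ ^ (1 - σ) / (1 - σ) := by
      rw [intervalIntegral.integral_const_mul, integral_rpow (Or.inl (by linarith))]
      rw [Real.zero_rpow (by linarith : -σ + 1 ≠ 0)]
      rw [show -σ + 1 = 1 - σ by ring]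
      ring
    calc |∫ y in (0:ℝ)..h₁, g y| ≤ ∫ y in (0:ℝ)..h₁, |g y| := habs
      _ ≤ ∫ y in (0:ℝ)..h₁, C * y ^ (-σ) := hmono
      _ = C * h₁ ^ (1 - σ) / (1 - σ) := hval
  -- bound on the sum
  have hSum : |∑ k, w k * ((h₁/2) * g ((h₁/2) * θ k + h₁/2))|
      ≤ C * (∑ k, w k * (1 + θ k) ^ (-σ)) * h₁ ^ (1 - σ) := by
    refine le_trans (Finset.abs_sum_le_sum_abs _ _) ?_
    have hterm : ∀ k : Fin m, |w k * ((h₁/2) * g ((h₁/2) * θ k + h₁/2))|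
        ≤ C * (w k * (1 + θ k) ^ (-σ)) * h₁ ^ (1 - σ) := by
      intro k
      obtain ⟨hk1, hk2⟩ := hθ k
      have hnodepos : 0 < (h₁/2) * θ k + h₁/2 := by nlinarith
      have hnodele : (h₁/2) * θ k + h₁/2 ≤ 1 := by nlinarith
      have hnode_eq : (h₁/2) * θ k + h₁/2 = (h₁/2) * (1 + θ k) := by ring
      have hgk := hgb _ ⟨hnodepos, hnodele⟩
      have hXnn : (0:ℝ) ≤ (1 + θ k) ^ (-σ) := Real.rpow_nonneg (by linarith) _
      rw [abs_mul, abs_mul, abs_of_pos (hw k), abs_of_pos (by linarith : (0:ℝ) < h₁/2)]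
      have hgk' : |g ((h₁/2) * θ k + h₁/2)| ≤ C * ((h₁/2) ^ (-σ) * (1 + θ k) ^ (-σ)) := by
        rw [← Real.mul_rpow (by linarith : (0:ℝ) ≤ h₁/2) (by linarith : (0:ℝ) ≤ 1 + θ k),
          ← hnode_eq]
        exact hgk
      have hmain : w k * ((h₁/2) * |g ((h₁/2) * θ k + h₁/2)|)
          ≤ w k * ((h₁/2) * (C * ((h₁/2) ^ (-σ) * (1 + θ k) ^ (-σ)))) := by
        have := (hw k).le
        gcongr
      refine le_trans hmain ?_
      have hcollect : (h₁/2) * (h₁/2) ^ (-σ) = (h₁/2) ^ (1 - σ) := by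
        rw [show (1:ℝ) - σ = 1 + (-σ) by ring,
          Real.rpow_add (by linarith : (0:ℝ) < h₁/2), Real.rpow_one]
      calc w k * ((h₁/2) * (C * ((h₁/2) ^ (-σ) * (1 + θ k) ^ (-σ))))
          = C * (w k * (1 + θ k) ^ (-σ)) * ((h₁/2) * (h₁/2) ^ (-σ)) := by ring
        _ = C * (w k * (1 + θ k) ^ (-σ)) * (h₁/2) ^ (1 - σ) := by rw [hcollect]
        _ ≤ C * (w k * (1 + θ k) ^ (-σ)) * h₁ ^ (1 - σ) := by
            apply mul_le_mul_of_nonneg_left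
              (Real.rpow_le_rpow (by linarith) (by linarith) h1σ.le)
            exact mul_nonneg hC.le (mul_nonneg (hw k).le hXnn)
    refine le_trans (Finset.sum_le_sum fun k _ => hterm k) ?_
    rw [← Finset.sum_mul, ← Finset.mul_sum]
  refine le_trans (abs_sub _ _) ?_
  have hident : C * (1/(1-σ) + ∑ k, w k * (1 + θ k) ^ (-σ)) * h₁ ^ (1 - σ)
      = C * h₁ ^ (1 - σ) / (1 - σ) + C * (∑ k, w k * (1 + θ k) ^ (-σ)) * h₁ ^ (1 - σ) := by
    field_simp
  linarith [hInt, hSum]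

lemma mesh_step {m : ℕ} (hm : 1 ≤ m) {σ : ℝ} (hσ0 : 0 < σ) (hσ1 : σ < 1)
    {x l : ℝ} (hx : 2 ≤ x) (hxl : x ≤ l) :
    (((x-1)/l) ^ ((2*(m:ℝ)+1)/(1-σ))) ^ (-σ - 2*(m:ℝ)) *
      ((x/l) ^ ((2*(m:ℝ)+1)/(1-σ)) - ((x-1)/l) ^ ((2*(m:ℝ)+1)/(1-σ))) ^ (2*m+1)
    ≤ 2 ^ (((2*(m:ℝ)+1)/(1-σ))*(σ+2*(m:ℝ))) * ((2*(m:ℝ)+1)/(1-σ)) ^ (2*m+1)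
        * l ^ (-(2*(m:ℝ)+1)) := by
  have h1σ : 0 < 1 - σ := by linarith
  have hm1 : (1:ℝ) ≤ (m:ℝ) := by exact_mod_cast hm
  set s : ℝ := (2*(m:ℝ)+1)/(1-σ) with hsdef
  have hs_eq : s * (1 - σ) = 2*(m:ℝ)+1 := by
    rw [hsdef]; field_simp
  have hs1 : 1 ≤ s := by
    rw [hsdef, le_div_iff₀ h1σ]; nlinarith
  have hs0 : 0 < s := by linarith
  have hx0 : 0 < x := by linarith
  have hl0 : 0 < l := by linarith
  have h2l0 : 0 < 2 * l := by linarith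
  have hx1l : 0 ≤ (x - 1)/l := by
    apply div_nonneg (by linarith) hl0.le
  set e : ℝ := -σ - 2*(m:ℝ) with hedef
  have he0 : e ≤ 0 := by rw [hedef]; nlinarith
  set A : ℝ := ((x-1)/l) ^ s with hA
  set B : ℝ := (x/l) ^ s with hB
  have hApos : 0 < (x/(2*l)) ^ s := Real.rpow_pos_of_pos (by positivity) s
  -- A is bounded below
  have hstep1 : (x/(2*l)) ^ s ≤ A := by
    apply Real.rpow_le_rpow (by positivity) _ hs0.le
    rw [div_le_div_iff₀ h2l0 hl0]
    nlinarith
  have hstep2 : A ^ e ≤ ((x/(2*l)) ^ s) ^ e :=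
    Real.rpow_le_rpow_of_nonpos hApos hstep1 he0
  -- B - A bounded above
  have hstep3 : B - A ≤ s * x ^ (s-1) / l ^ s := by
    rw [hB, hA, Real.div_rpow hx0.le hl0.le, Real.div_rpow (by linarith) hl0.le,
      div_sub_div_same, div_le_div_iff₀ (Real.rpow_pos_of_pos hl0 s) (Real.rpow_pos_of_pos hl0 s)]
    have := rpow_diff_le hs1 (by linarith : (1:ℝ) ≤ x)
    nlinarith [Real.rpow_pos_of_pos hl0 s, Real.rpow_nonneg hx0.le (s-1), hs0]
  have hBA0 : 0 ≤ B - A := by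
    rw [hB, hA]
    have : ((x-1)/l) ^ s ≤ (x/l) ^ s := by
      apply Real.rpow_le_rpow hx1l _ hs0.le
      gcongr <;> linarith
    linarith
  have hstep4 : (B - A)^(2*m+1) ≤ (s * x^(s-1) / l^s)^(2*m+1) :=
    pow_le_pow_left₀ hBA0 hstep3 _
  have hcomb : A ^ e * (B - A)^(2*m+1) ≤ ((x/(2*l))^s)^e * (s * x^(s-1)/l^s)^(2*m+1) :=
    mul_le_mul hstep2 hstep4 (pow_nonneg hBA0 _) (Real.rpow_nonneg hApos.le e)
  refine hcomb.trans (le_of_eq ?_)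
  rw [← Real.rpow_natCast (s * x^(s-1)/l^s) (2*m+1), ← Real.rpow_natCast s (2*m+1)]
  push_cast
  rw [← Real.rpow_mul (by positivity : (0:ℝ) ≤ x/(2*l))]
  rw [Real.div_rpow hx0.le h2l0.le]
  rw [Real.mul_rpow (by norm_num : (0:ℝ) ≤ 2) hl0.le]
  rw [Real.div_rpow (mul_nonneg hs0.le (Real.rpow_nonneg hx0.le _)) (Real.rpow_nonneg hl0.le s)]
  rw [Real.mul_rpow hs0.le (Real.rpow_nonneg hx0.le _)]
  rw [← Real.rpow_mul hx0.le, ← Real.rpow_mul hl0.le]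
  calc x ^ (s*e) / (2 ^ (s*e) * l ^ (s*e)) * (s ^ (2*(m:ℝ)+1) * x ^ ((s-1)*(2*(m:ℝ)+1))
        / l ^ (s*(2*(m:ℝ)+1)))
      = (x ^ (s*e) * x ^ ((s-1)*(2*(m:ℝ)+1))) * 2 ^ (-(s*e)) * (l ^ (-(s*e)) * l ^ (-(s*(2*(m:ℝ)+1))))
          * s ^ (2*(m:ℝ)+1) := by
        rw [Real.rpow_neg (by norm_num : (0:ℝ) ≤ 2), Real.rpow_neg hl0.le,
          Real.rpow_neg hl0.le]
        ring
    _ = x ^ (s*e + (s-1)*(2*(m:ℝ)+1)) * 2 ^ (-(s*e)) * l ^ (-(s*e) + -(s*(2*(m:ℝ)+1)))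
          * s ^ (2*(m:ℝ)+1) := by
        rw [← Real.rpow_add hx0, ← Real.rpow_add hl0]
    _ = 2 ^ (s*(σ+2*(m:ℝ))) * s ^ (2*(m:ℝ)+1) * l ^ (-(2*(m:ℝ)+1)) := by
        rw [show s*e + (s-1)*(2*(m:ℝ)+1) = 0 by rw [hedef]; linear_combination hs_eq]
        rw [show -(s*e) = s*(σ+2*(m:ℝ)) by rw [hedef]; ring]
        rw [show s*(σ+2*(m:ℝ)) + -(s*(2*(m:ℝ)+1)) = -(2*(m:ℝ)+1) by linear_combination -hs_eq]
        rw [Real.rpow_zero]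
        ring
-- main theorem body (appended to a.lean content when testing)
set_option maxHeartbeats 1000000 in
/-- Composite graded-mesh quadrature for weakly singular integrands: if a rule with nodes
`θ_k ∈ (−1,1)` and positive weights `w_k` is exact on polynomials of degree at most
`2m − 1`, `σ ∈ (0,1)`, and `g` satisfies `|g(y)| ≤ C y^{−σ}` and
`|g^{(2m)}(y)| ≤ C y^{−σ−2m}` on `(0,1]`, then with the graded mesh `h_q = (q/L)^s`,
`s = (2m+1)/(1−σ)`, the composite rule converges with rate `L^{−2m}`, with a constant
independent of `g` (given `C`) and of `L`. -/
theorem composite_graded_quadrature_error (m : ℕ) (hm : 1 ≤ m)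
    (σ : ℝ) (hσ : σ ∈ Set.Ioo (0 : ℝ) 1)
    (θ w : Fin m → ℝ) (hθ : ∀ k, θ k ∈ Set.Ioo (-1 : ℝ) 1) (hw : ∀ k, 0 < w k)
    (hexact : ∀ p : Polynomial ℝ, p.natDegree ≤ 2 * m - 1 →
      ∑ k, w k * p.eval (θ k) = ∫ t in (-1 : ℝ)..1, p.eval t)
    (C : ℝ) (hC : 0 < C) :
    ∃ C' : ℝ, 0 < C' ∧ ∀ g : ℝ → ℝ,
      ContDiffOn ℝ (2 * m) g (Set.Ioc 0 1) →
      (∀ y ∈ Set.Ioc (0 : ℝ) 1, |g y| ≤ C * y ^ (-σ)) →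
      (∀ y ∈ Set.Ioc (0 : ℝ) 1,
        |iteratedDerivWithin (2 * m) g (Set.Ioc 0 1) y| ≤ C * y ^ (-σ - 2 * m)) →
      ∀ L : ℕ, 1 ≤ L →
        |(∫ y in (0 : ℝ)..1, g y) -
            ∑ q ∈ Finset.Icc 1 L, ∑ k,
              w k * ((((q : ℝ) / L) ^ ((2 * m + 1) / (1 - σ)) -
                  (((q : ℝ) - 1) / L) ^ ((2 * m + 1) / (1 - σ))) / 2) *
                g (((((q : ℝ) / L) ^ ((2 * m + 1) / (1 - σ)) -
                      (((q : ℝ) - 1) / L) ^ ((2 * m + 1) / (1 - σ))) / 2) * θ k +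
                    ((((q : ℝ) / L) ^ ((2 * m + 1) / (1 - σ)) +
                      (((q : ℝ) - 1) / L) ^ ((2 * m + 1) / (1 - σ))) / 2))| ≤
          C' * (L : ℝ) ^ (-(2 * (m : ℝ))) := by
  obtain ⟨hσ0, hσ1⟩ := hσ
  have h1σ : 0 < 1 - σ := by linarith
  have hm1 : (1:ℝ) ≤ (m:ℝ) := by exact_mod_cast hm
  set s : ℝ := (2 * (m:ℝ) + 1) / (1 - σ) with hsdef
  have hs_eq : s * (1 - σ) = 2 * (m:ℝ) + 1 := by rw [hsdef]; field_simp
  have hs1 : 1 ≤ s := by rw [hsdef, le_div_iff₀ h1σ]; nlinarith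
  have hs0 : 0 < s := by linarith
  set A : ℝ := ∑ k, w k * (1 + θ k) ^ (-σ) with hAdef
  have hA0 : 0 ≤ A :=
    Finset.sum_nonneg fun k _ => mul_nonneg (hw k).le
      (Real.rpow_nonneg (by linarith [(hθ k).1]) _)
  set K₁ : ℝ := C * (1/(1-σ) + A) with hK₁
  have hK₁0 : 0 < K₁ := by
    apply mul_pos hC
    have : 0 < 1/(1-σ) := by positivity
    linarith
  set K₂ : ℝ := 2 * C * (2 ^ (s*(σ+2*(m:ℝ))) * s ^ (2*m+1)) / ((2*m-1).factorial : ℝ) with hK₂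
  have hK₂0 : 0 < K₂ := by
    apply div_pos
    · exact mul_pos (by linarith) (mul_pos (Real.rpow_pos_of_pos two_pos _) (pow_pos hs0 _))
    · positivity
  refine ⟨K₁ + K₂, by linarith, ?_⟩
  intro g hg hgb hgd L hL
  set l : ℝ := (L:ℝ) with hldef
  have hl1 : 1 ≤ l := by rw [hldef]; exact_mod_cast hL
  have hl0 : 0 < l := by linarith
  set a : ℕ → ℝ := fun q => ((q:ℝ)/l) ^ s with hadef
  have ha_nn : ∀ q : ℕ, 0 ≤ a q := fun q => Real.rpow_nonneg (by positivity) _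
  have ha_mono : ∀ p q : ℕ, p ≤ q → a p ≤ a q := by
    intro p q hpq
    apply Real.rpow_le_rpow (by positivity) _ hs0.le
    have : (p:ℝ) ≤ (q:ℝ) := by exact_mod_cast hpq
    gcongr
  have ha0 : a 0 = 0 := by
    simp only [hadef, Nat.cast_zero, zero_div]
    exact Real.zero_rpow hs0.ne'
  have haL : a L = 1 := by
    simp only [hadef, ← hldef, div_self hl0.ne']
    exact Real.one_rpow s
  have ha_le1 : ∀ q : ℕ, q ≤ L → a q ≤ 1 := by
    intro q hq
    rw [← haL]
    exact ha_mono q L hq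
  have ha_pos : ∀ q : ℕ, 1 ≤ q → 0 < a q := by
    intro q hq
    apply Real.rpow_pos_of_pos
    have : (0:ℝ) < (q:ℝ) := by exact_mod_cast hq
    positivity
  have ha_lt : ∀ q : ℕ, q < L → a q < a (q+1) := by
    intro q _
    apply Real.rpow_lt_rpow (by positivity) _ hs0
    gcongr
    push_cast
    linarith
  -- integrability
  have hint : ∀ u v : ℝ, 0 ≤ u → u ≤ v → v ≤ 1 → IntervalIntegrable g volume u v := by
    intro u v hu huv hv
    rw [intervalIntegrable_iff_integrableOn_Ioc_of_le huv]
    have hsub : Set.Ioc u v ⊆ Set.Ioc 0 1 := Set.Ioc_subset_Ioc hu hv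
    have hbm : MeasureTheory.IntegrableOn (fun y => C * y ^ (-σ)) (Set.Ioc u v) volume := by
      have h2 := (intervalIntegrable_rpow' (a := u) (b := v)
        (by linarith : (-1:ℝ) < -σ)).const_mul C
      rwa [intervalIntegrable_iff_integrableOn_Ioc_of_le huv] at h2
    refine MeasureTheory.Integrable.mono' hbm
      ((hg.continuousOn.mono hsub).aestronglyMeasurable measurableSet_Ioc) ?_
    rw [MeasureTheory.ae_restrict_iff' measurableSet_Ioc]
    exact Filter.Eventually.of_forall fun y hy => by
      rw [Real.norm_eq_abs]; exact hgb y (hsub hy)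
  -- splitting the integral
  have hsplit : (∫ y in (0:ℝ)..1, g y) = ∑ i ∈ Finset.range L, ∫ y in a i..a (i+1), g y := by
    have h2 := intervalIntegral.sum_integral_adjacent_intervals (μ := volume) (f := g)
      (a := a) (n := L) (fun k hk => hint _ _ (ha_nn k) (ha_lt k hk).le (ha_le1 (k+1) hk))
    rw [ha0, haL] at h2
    exact h2.symm
  -- the composite sum, in terms of the mesh
  set Sa : ℕ → ℝ := fun q => ∑ k, w k * ((a q - a (q-1))/2) *
      g (((a q - a (q-1))/2) * θ k + ((a q + a (q-1))/2)) with hSa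
  have hgoalsum : (∑ q ∈ Finset.Icc 1 L, ∑ k,
        w k * ((((q:ℝ)/l)^s - (((q:ℝ)-1)/l)^s)/2) *
          g (((((q:ℝ)/l)^s - (((q:ℝ)-1)/l)^s)/2) * θ k +
            ((((q:ℝ)/l)^s + (((q:ℝ)-1)/l)^s)/2)))
      = ∑ i ∈ Finset.range L, Sa (i+1) := by
    have hbody : ∀ q ∈ Finset.Icc 1 L, (∑ k,
        w k * ((((q:ℝ)/l)^s - (((q:ℝ)-1)/l)^s)/2) *
          g (((((q:ℝ)/l)^s - (((q:ℝ)-1)/l)^s)/2) * θ k +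
            ((((q:ℝ)/l)^s + (((q:ℝ)-1)/l)^s)/2))) = Sa q := by
      intro q hq
      have hq1 : 1 ≤ q := (Finset.mem_Icc.mp hq).1
      simp only [hSa, hadef, Nat.cast_sub hq1, Nat.cast_one]
    rw [Finset.sum_congr rfl hbody, ← Finset.Ico_add_one_right_eq_Icc, Finset.sum_Ico_eq_sum_range]
    refine Finset.sum_congr (by norm_num) fun i _ => ?_
    rw [add_comm 1 i]
  -- the rpow value of the mesh scale
  have hl_collapse : ∀ c : ℝ, ((1/l) ^ s) ^ c = l ^ (-(s * c)) := by
    intro c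
    rw [← Real.rpow_mul (by positivity : (0:ℝ) ≤ 1/l), one_div,
      Real.inv_rpow hl0.le, ← Real.rpow_neg hl0.le]
  -- per-term bounds
  have hperterm : ∀ i ∈ Finset.range L,
      |(∫ y in a i..a (i+1), g y) - Sa (i+1)| ≤ (K₁ + K₂) * l ^ (-(2*(m:ℝ)+1)) := by
    intro i hi
    have hiL : i < L := Finset.mem_range.mp hi
    have hlpow : (0:ℝ) < l ^ (-(2*(m:ℝ)+1)) := Real.rpow_pos_of_pos hl0 _
    rcases Nat.eq_zero_or_pos i with hi0 | hi1
    · -- first interval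
      subst hi0
      have h1pos : 0 < a 1 := ha_pos 1 le_rfl
      have h1le : a 1 ≤ 1 := ha_le1 1 hL
      have hfib := first_interval_bound θ w hθ hw hC hσ0 hσ1 hg hgb h1pos h1le
        (hint 0 (a 1) le_rfl h1pos.le h1le)
      have hS1 : Sa (0+1) = ∑ k, w k * ((a 1/2) * g ((a 1/2) * θ k + a 1/2)) := by
        simp only [hSa, Nat.add_sub_cancel, Nat.zero_add, ha0]
        refine Finset.sum_congr rfl fun k _ => ?_
        ring_nf
      have hval : a 1 ^ (1 - σ) = l ^ (-(2*(m:ℝ)+1)) := by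
        have h1 : a 1 = (1/l) ^ s := by
          simp only [hadef, Nat.cast_one]
        rw [h1, hl_collapse, hs_eq]
      rw [hS1, show a 0 = (0:ℝ) from ha0] at *
      calc |(∫ y in (0:ℝ)..a 1, g y) - ∑ k, w k * ((a 1/2) * g ((a 1/2) * θ k + a 1/2))|
          ≤ C * (1/(1-σ) + A) * a 1 ^ (1 - σ) := hfib
        _ = K₁ * l ^ (-(2*(m:ℝ)+1)) := by rw [hval, hK₁]
        _ ≤ (K₁ + K₂) * l ^ (-(2*(m:ℝ)+1)) := by nlinarith
    · -- later intervals
      have hapos : 0 < a i := ha_pos i hi1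
      have halt : a i < a (i+1) := ha_lt i hiL
      have hale : a (i+1) ≤ 1 := ha_le1 (i+1) hiL
      have hsie := single_interval_error hm θ w hθ hw hexact hC hσ0.le hg hgd
        hapos halt hale
      have hS : Sa (i+1) = ∑ k, w k * (((a (i+1) - a i)/2) *
          g (((a (i+1) - a i)/2) * θ k + (a i + a (i+1))/2)) := by
        simp only [hSa, Nat.add_sub_cancel]
        refine Finset.sum_congr rfl fun k _ => ?_
        rw [show (a i + a (i+1))/2 = (a (i+1) + a i)/2 by ring, mul_assoc]
      rw [hS]
      refine hsie.trans ?_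
      -- now the mesh arithmetic
      have hxi : (2:ℝ) ≤ (i:ℝ) + 1 := by
        have : (1:ℝ) ≤ (i:ℝ) := by exact_mod_cast hi1
        linarith
      have hxl : (i:ℝ) + 1 ≤ l := by
        rw [hldef]
        exact_mod_cast hiL
      have hms := mesh_step hm hσ0 hσ1 hxi hxl
      rw [show (i:ℝ) + 1 - 1 = (i:ℝ) by ring, ← hsdef] at hms
      have hai : a i = ((i:ℝ)/l) ^ s := by simp only [hadef]
      have hai1 : a (i+1) = (((i:ℝ)+1)/l) ^ s := by
        simp only [hadef]
        push_cast
        ring_nf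
      rw [← hai, ← hai1] at hms
      have hfac : (0:ℝ) < ((2*m-1).factorial : ℝ) := by positivity
      calc 2 * (C * a i ^ (-σ - 2*(m:ℝ))) * (a (i+1) - a i) ^ (2*m+1) / ((2*m-1).factorial : ℝ)
          = (2 * C / ((2*m-1).factorial : ℝ)) *
              (a i ^ (-σ - 2*(m:ℝ)) * (a (i+1) - a i) ^ (2*m+1)) := by ring
        _ ≤ (2 * C / ((2*m-1).factorial : ℝ)) *
              (2 ^ (s*(σ+2*(m:ℝ))) * s ^ (2*m+1) * l ^ (-(2*(m:ℝ)+1))) := by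
            apply mul_le_mul_of_nonneg_left hms
            exact le_of_lt (div_pos (by linarith) hfac)
        _ = K₂ * l ^ (-(2*(m:ℝ)+1)) := by rw [hK₂]; ring
        _ ≤ (K₁ + K₂) * l ^ (-(2*(m:ℝ)+1)) := by nlinarith
  -- assemble
  rw [hsplit, hgoalsum, ← Finset.sum_sub_distrib]
  refine le_trans (Finset.abs_sum_le_sum_abs _ _) ?_
  refine le_trans (Finset.sum_le_sum hperterm) ?_
  rw [Finset.sum_const, Finset.card_range, nsmul_eq_mul, ← hldef]
  have hfin : l * ((K₁ + K₂) * l ^ (-(2*(m:ℝ)+1))) = (K₁ + K₂) * l ^ (-(2*(m:ℝ))) := by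
    rw [show l * ((K₁ + K₂) * l ^ (-(2*(m:ℝ)+1))) = (K₁ + K₂) * (l ^ (1:ℝ) * l ^ (-(2*(m:ℝ)+1)))
        by rw [Real.rpow_one]; ring, ← Real.rpow_add hl0]
    norm_num
  rw [hfin]
end

section
/- For every x ∈ (0, π), the improper Lebesgue integral ∫_0^π ln|cos x − cos t| dt exists and equals −π·ln 2. Consequently, the constant function u(x) = 1/(π ln 2 + 1) is a solution of the weakly singular Fredholm integral equation u(x) − ∫_0^π ln|cos x − cos t|·u(t) dt = 1 for x ∈ (0, π). -/
open MeasureTheory Real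

namespace LogCosAux

open Set intervalIntegral

noncomputable def f : ℝ → ℝ := fun t => Real.log |Real.sin t|

lemma f_neg (t : ℝ) : f (-t) = f t := by simp [f]

lemma f_pi_sub (t : ℝ) : f (π - t) = f t := by simp [f, Real.sin_pi_sub]

lemma f_int_base : IntervalIntegrable f volume 0 (π / 2) := by
  have hle : (0:ℝ) ≤ π / 2 := by positivity
  rw [intervalIntegrable_iff_integrableOn_Ioc_of_le hle]
  have hg : IntegrableOn (fun t : ℝ => Real.log (π / 2) + 2 * t ^ (-(1/2) : ℝ))
      (Ioc 0 (π / 2)) volume := by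
    rw [← intervalIntegrable_iff_integrableOn_Ioc_of_le hle]
    exact (_root_.intervalIntegrable_const).add
      ((intervalIntegrable_rpow' (by norm_num)).const_mul 2)
  apply Integrable.mono' hg
  · exact (Real.measurable_log.comp Real.measurable_sin.abs).aestronglyMeasurable
  · filter_upwards [ae_restrict_mem measurableSet_Ioc] with t ht
    obtain ⟨ht0, ht2⟩ := ht
    have htpi : t < π := lt_of_le_of_lt ht2 (by linarith [Real.pi_pos])
    have hs0 : 0 < Real.sin t := Real.sin_pos_of_pos_of_lt_pi ht0 htpi
    have habs : |Real.sin t| = Real.sin t := abs_of_pos hs0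
    show ‖f t‖ ≤ _
    rw [f, Real.norm_eq_abs, habs,
      abs_of_nonpos (Real.log_nonpos hs0.le (Real.sin_le_one t))]
    have h1 : 2 / π * t ≤ Real.sin t := Real.mul_le_sin ht0.le ht2
    have h2 : Real.log (2 / π * t) ≤ Real.log (Real.sin t) :=
      Real.log_le_log (by positivity) h1
    have h3 : Real.log (2 / π * t) = -Real.log (π / 2) + Real.log t := by
      rw [Real.log_mul (by positivity) (ne_of_gt ht0),
        show (2:ℝ) / π = (π / 2)⁻¹ by field_simp, Real.log_inv]
    have h5 : Real.log (t ^ (-(1/2) : ℝ)) ≤ t ^ (-(1/2) : ℝ) - 1 :=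
      Real.log_le_sub_one_of_pos (by positivity)
    rw [Real.log_rpow ht0] at h5
    have h6 : (0:ℝ) ≤ t ^ (-(1/2) : ℝ) := Real.rpow_nonneg ht0.le _
    linarith

lemma f_int_neg : IntervalIntegrable f volume (-(π / 2)) 0 := by
  have h := (IntervalIntegrable.iff_comp_neg).mp f_int_base
  simp only [f_neg, neg_zero] at h
  exact h.symm

lemma f_int_high : IntervalIntegrable f volume (π / 2) π := by
  have h := f_int_base.comp_sub_left π
  simp only [f_pi_sub, sub_zero] at h
  rw [show π - π / 2 = π / 2 by ring] at h
  exact h.symm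

lemma f_int_all : IntervalIntegrable f volume (-(π / 2)) π :=
  (f_int_neg.trans f_int_base).trans f_int_high

lemma f_int {a b : ℝ} (ha : a ∈ Icc (-(π / 2)) π) (hb : b ∈ Icc (-(π / 2)) π) :
    IntervalIntegrable f volume a b := by
  apply f_int_all.mono_set
  rw [Set.uIcc_of_le (by linarith [Real.pi_pos] : -(π/2) ≤ π)]
  exact Set.uIcc_subset_Icc ha hb

lemma S_reflect (a b : ℝ) : (∫ t in a..b, f t) = ∫ t in (π - b)..(π - a), f t := by
  have h := intervalIntegral.integral_comp_sub_left (a := a) (b := b) f π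
  simp only [f_pi_sub] at h
  exact h

lemma S_even (a : ℝ) : (∫ t in (-a)..(0:ℝ), f t) = ∫ t in (0:ℝ)..a, f t := by
  have h := intervalIntegral.integral_comp_neg (a := (0:ℝ)) (b := a) f
  simp only [f_neg, neg_zero] at h
  exact h.symm


lemma S_pi : (∫ t in (0:ℝ)..π, f t) = 2 * ∫ t in (0:ℝ)..(π/2), f t := by
  have h1 := intervalIntegral.integral_add_adjacent_intervals f_int_base f_int_high
  have h2 : (∫ t in (π/2:ℝ)..π, f t) = ∫ t in (0:ℝ)..(π/2), f t := by
    rw [S_reflect (π/2) π, sub_self, show π - π/2 = π/2 by ring]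
  linarith

lemma logcos_int : IntervalIntegrable (fun t => Real.log |Real.cos t|) volume 0 (π / 2) := by
  have h := f_int_base.comp_sub_left (π / 2)
  have heq : (fun x => f (π / 2 - x)) = fun t => Real.log |Real.cos t| := by
    funext t; simp [f, Real.sin_pi_div_two_sub]
  rw [heq] at h
  simpa using h.symm

lemma logcos_val : (∫ t in (0:ℝ)..(π/2), Real.log |Real.cos t|) = ∫ t in (0:ℝ)..(π/2), f t := by
  have h := intervalIntegral.integral_comp_sub_left (a := (0:ℝ)) (b := π/2) f (π/2)
  simp only [sub_self, sub_zero] at h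
  rw [← h]
  apply intervalIntegral.integral_congr
  intro t _
  simp [f, Real.sin_pi_div_two_sub]

lemma I_val : (∫ t in (0:ℝ)..(π/2), f t) = -(π / 2) * Real.log 2 := by
  have hpi := Real.pi_pos
  have hd : (∫ t in (0:ℝ)..(π/2), f (2 * t)) = (2:ℝ)⁻¹ • ∫ t in (0:ℝ)..π, f t := by
    have h := intervalIntegral.integral_comp_mul_left (a := (0:ℝ)) (b := π/2) f
      (c := 2) two_ne_zero
    rw [mul_zero, show (2:ℝ) * (π/2) = π by ring] at h
    exact h
  have hne : ∀ᵐ t : ℝ, t ≠ π / 2 := compl_mem_ae_iff.mpr (measure_singleton _)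
  have hcongr : (∫ t in (0:ℝ)..(π/2), f (2 * t))
      = ∫ t in (0:ℝ)..(π/2), (Real.log 2 + f t + Real.log |Real.cos t|) := by
    apply intervalIntegral.integral_congr_ae
    filter_upwards [hne] with t ht htmem
    rw [Set.uIoc_of_le (by positivity : (0:ℝ) ≤ π/2)] at htmem
    obtain ⟨h0, h2⟩ := htmem
    have hlt : t < π / 2 := lt_of_le_of_ne h2 ht
    have hs : 0 < Real.sin t := Real.sin_pos_of_pos_of_lt_pi h0 (by linarith)
    have hc : 0 < Real.cos t := Real.cos_pos_of_mem_Ioo ⟨by linarith, hlt⟩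
    show Real.log |Real.sin (2 * t)| = _
    rw [Real.sin_two_mul, show (2:ℝ) * Real.sin t * Real.cos t
        = 2 * (Real.sin t * Real.cos t) by ring, abs_mul, abs_mul,
      Real.log_mul (by norm_num) (by positivity),
      Real.log_mul (by positivity) (by positivity)]
    simp [f]
    ring
  have hsplit : (∫ t in (0:ℝ)..(π/2), (Real.log 2 + f t + Real.log |Real.cos t|))
      = (π/2) * Real.log 2 + (∫ t in (0:ℝ)..(π/2), f t)
        + ∫ t in (0:ℝ)..(π/2), Real.log |Real.cos t| := by
    rw [intervalIntegral.integral_add (((_root_.intervalIntegrable_const).add f_int_base))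
        logcos_int,
      intervalIntegral.integral_add (_root_.intervalIntegrable_const) f_int_base]
    simp [mul_comm]
  have := hd
  rw [hcongr, hsplit, logcos_val, S_pi] at this
  have h2I : (2:ℝ)⁻¹ • (2 * ∫ t in (0:ℝ)..(π/2), f t) = ∫ t in (0:ℝ)..(π/2), f t := by
    simp [smul_eq_mul]
  rw [h2I] at this
  linarith


end LogCosAux

open LogCosAux Set intervalIntegral in

/-- For every `x ∈ (0, π)`, `∫_0^π ln|cos x − cos t| dt = −π ln 2`; consequently the
constant function `u ≡ 1/(π ln 2 + 1)` solves the weakly singular Fredholm integral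
equation `u(x) − ∫_0^π ln|cos x − cos t| u(t) dt = 1` on `(0, π)`. -/
theorem log_cos_kernel_integral (x : ℝ) (hx : x ∈ Set.Ioo 0 π) :
    IntegrableOn (fun t => Real.log |Real.cos x - Real.cos t|) (Set.Ioc 0 π) volume ∧
    (∫ t in (0 : ℝ)..π, Real.log |Real.cos x - Real.cos t|) = -π * Real.log 2 ∧
    (fun _ : ℝ => 1 / (π * Real.log 2 + 1)) x -
        (∫ t in (0 : ℝ)..π, Real.log |Real.cos x - Real.cos t| *
          (fun _ : ℝ => 1 / (π * Real.log 2 + 1)) t) = 1 := by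
  obtain ⟨hx0, hxpi⟩ := hx
  have hpi := Real.pi_pos
  -- memberships for f_int
  have mem1 : x / 2 ∈ Icc (-(π/2)) π := ⟨by linarith, by linarith⟩
  have mem2 : x / 2 + π / 2 ∈ Icc (-(π/2)) π := ⟨by linarith, by linarith⟩
  have mem3 : -(x / 2) ∈ Icc (-(π/2)) π := ⟨by linarith, by linarith⟩
  have mem4 : π / 2 - x / 2 ∈ Icc (-(π/2)) π := ⟨by linarith, by linarith⟩
  have mem0 : (0 : ℝ) ∈ Icc (-(π/2)) π := ⟨by linarith, by linarith⟩
  have memh : π / 2 ∈ Icc (-(π/2)) π := ⟨by linarith, by linarith⟩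
  -- integrability of the two shifted pieces on 0..π
  have h1 : IntervalIntegrable (fun t => f (t / 2 + x / 2)) volume 0 π := by
    have h := ((f_int mem1 mem2).comp_add_right (x / 2)).comp_mul_right (c := 2⁻¹)
    rw [show x/2 - x/2 = (0:ℝ) by ring, show x/2 + π/2 - x/2 = π/2 by ring,
      zero_div, show (π/2) / 2⁻¹ = π by rw [div_eq_mul_inv, inv_inv]; ring] at h
    simpa only [← div_eq_mul_inv] using h
  have h2 : IntervalIntegrable (fun t => f (t / 2 - x / 2)) volume 0 π := by
    have h := ((f_int mem3 mem4).comp_add_right (-(x / 2))).comp_mul_right (c := 2⁻¹)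
    rw [show -(x/2) - -(x/2) = (0:ℝ) by ring,
      show π/2 - x/2 - -(x/2) = π/2 by ring,
      zero_div, show (π/2) / 2⁻¹ = π by rw [div_eq_mul_inv, inv_inv]; ring] at h
    simp only [← div_eq_mul_inv, ← sub_eq_add_neg] at h
    exact h
  set F : ℝ → ℝ := fun t => Real.log 2 + f (t / 2 + x / 2) + f (t / 2 - x / 2) with hF
  have hFint : IntervalIntegrable F volume 0 π :=
    ((_root_.intervalIntegrable_const).add h1).add h2
  -- pointwise identity away from t = x
  have hpt : ∀ t ∈ Ioc (0:ℝ) π, t ≠ x →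
      Real.log |Real.cos x - Real.cos t| = F t := by
    intro t ⟨ht0, htpi⟩ htx
    have hs1 : 0 < Real.sin (t / 2 + x / 2) :=
      Real.sin_pos_of_pos_of_lt_pi (by linarith) (by linarith)
    have hs2 : Real.sin (t / 2 - x / 2) ≠ 0 := by
      rcases lt_trichotomy t x with h | h | h
      · have : 0 < Real.sin (-(t / 2 - x / 2)) :=
          Real.sin_pos_of_pos_of_lt_pi (by linarith) (by linarith)
        rw [Real.sin_neg] at this; linarith
      · exact absurd h htx
      · exact ne_of_gt (Real.sin_pos_of_pos_of_lt_pi (by linarith) (by linarith))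
    have key : |Real.cos x - Real.cos t|
        = 2 * (|Real.sin (t / 2 + x / 2)| * |Real.sin (t / 2 - x / 2)|) := by
      rw [Real.cos_sub_cos, show (x + t) / 2 = t / 2 + x / 2 by ring,
        show (x - t) / 2 = -(t / 2 - x / 2) by ring, Real.sin_neg]
      rw [show (-2 : ℝ) * Real.sin (t/2 + x/2) * -Real.sin (t/2 - x/2)
          = 2 * (Real.sin (t/2 + x/2) * Real.sin (t/2 - x/2)) by ring]
      rw [abs_mul, abs_mul]
      norm_num
    rw [key, Real.log_mul (by norm_num) (by positivity),
      Real.log_mul (by positivity) (by positivity)]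
    simp only [hF, f]
    ring
  have hne : ∀ᵐ t : ℝ, t ≠ x := compl_mem_ae_iff.mpr (measure_singleton _)
  -- Part 1 : integrability
  have hKint : IntegrableOn (fun t => Real.log |Real.cos x - Real.cos t|)
      (Set.Ioc 0 π) volume := by
    have hFI : IntegrableOn F (Set.Ioc 0 π) volume :=
      (intervalIntegrable_iff_integrableOn_Ioc_of_le hpi.le).mp hFint
    apply hFI.congr
    filter_upwards [ae_restrict_mem measurableSet_Ioc, ae_restrict_of_ae hne] with t ht htx
    exact (hpt t ht htx).symm
  -- the value of the integral
  have hval : (∫ t in (0 : ℝ)..π, Real.log |Real.cos x - Real.cos t|) = -π * Real.log 2 := by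
    have hcongr : (∫ t in (0 : ℝ)..π, Real.log |Real.cos x - Real.cos t|)
        = ∫ t in (0 : ℝ)..π, F t := by
      apply intervalIntegral.integral_congr_ae
      filter_upwards [hne] with t htx htmem
      rw [Set.uIoc_of_le hpi.le] at htmem
      exact hpt t htmem htx
    have hA : (∫ t in (0:ℝ)..π, f (t / 2 + x / 2))
        = 2 * ∫ u in (x/2)..(π/2 + x/2), f u := by
      have h := intervalIntegral.integral_comp_div_add (a := (0:ℝ)) (b := π) f
        (c := 2) two_ne_zero (x / 2)
      rw [zero_div, zero_add] at h
      rw [h, smul_eq_mul]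
    have hB : (∫ t in (0:ℝ)..π, f (t / 2 - x / 2))
        = 2 * ∫ u in (-(x/2))..(π/2 - x/2), f u := by
      have h := intervalIntegral.integral_comp_div_sub (a := (0:ℝ)) (b := π) f
        (c := 2) two_ne_zero (x / 2)
      rw [zero_div, zero_sub, show π / 2 - x / 2 = π / 2 - x / 2 from rfl] at h
      rw [h, smul_eq_mul]
    -- sum of the two shifted integrals equals 2 I
    have hsum : (∫ u in (x/2)..(π/2 + x/2), f u) + (∫ u in (-(x/2))..(π/2 - x/2), f u)
        = 2 * ∫ u in (0:ℝ)..(π/2), f u := by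
      have mem5 : π / 2 + x / 2 ∈ Icc (-(π/2)) π := ⟨by linarith, by linarith⟩
      have split1 : (∫ u in (x/2)..(π/2 + x/2), f u)
          = (∫ u in (x/2)..(π/2), f u) + ∫ u in (π/2)..(π/2 + x/2), f u :=
        (intervalIntegral.integral_add_adjacent_intervals
          (f_int mem1 memh) (f_int memh mem5)).symm
      have refl1 : (∫ u in (π/2)..(π/2 + x/2), f u) = ∫ u in (π/2 - x/2)..(π/2), f u := by
        rw [S_reflect (π/2) (π/2 + x/2), show π - (π/2 + x/2) = π/2 - x/2 by ring,
          show π - π/2 = π/2 by ring]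
      have split2 : (∫ u in (-(x/2))..(π/2 - x/2), f u)
          = (∫ u in (-(x/2))..(0:ℝ), f u) + ∫ u in (0:ℝ)..(π/2 - x/2), f u :=
        (intervalIntegral.integral_add_adjacent_intervals
          (f_int mem3 mem0) (f_int mem0 mem4)).symm
      have even1 : (∫ u in (-(x/2))..(0:ℝ), f u) = ∫ u in (0:ℝ)..(x/2), f u := S_even _
      have splitI1 : (∫ u in (0:ℝ)..(π/2), f u)
          = (∫ u in (0:ℝ)..(x/2), f u) + ∫ u in (x/2)..(π/2), f u :=
        (intervalIntegral.integral_add_adjacent_intervals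
          (f_int mem0 mem1) (f_int mem1 memh)).symm
      have splitI2 : (∫ u in (0:ℝ)..(π/2), f u)
          = (∫ u in (0:ℝ)..(π/2 - x/2), f u) + ∫ u in (π/2 - x/2)..(π/2), f u :=
        (intervalIntegral.integral_add_adjacent_intervals
          (f_int mem0 mem4) (f_int mem4 memh)).symm
      rw [split1, refl1, split2, even1]
      linarith
    have hFval : (∫ t in (0:ℝ)..π, F t) = -π * Real.log 2 := by
      rw [hF]
      rw [intervalIntegral.integral_add ((_root_.intervalIntegrable_const).add h1) h2,
        intervalIntegral.integral_add (_root_.intervalIntegrable_const) h1,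
        intervalIntegral.integral_const, hA, hB]
      simp only [sub_zero, smul_eq_mul]
      have hI := I_val
      linarith
    rw [hcongr, hFval]
  refine ⟨hKint, hval, ?_⟩
  -- the Fredholm equation
  have hlog2 : 0 < Real.log 2 := Real.log_pos one_lt_two
  have hden : π * Real.log 2 + 1 ≠ 0 := by positivity
  show (1 : ℝ) / (π * Real.log 2 + 1) -
      (∫ t in (0 : ℝ)..π, Real.log |Real.cos x - Real.cos t| * (1 / (π * Real.log 2 + 1))) = 1
  rw [intervalIntegral.integral_mul_const, hval]
  field_simp
  ring
end

section
/- For every x ∈ (0, 1), the improper Lebesgue integral ∫_0^1 ln|x − t|·(3t² − 1) dt exists and equals −(x³ − x)·ln((1 − x)/x) − x² − x/2 + 2/3. Consequently, the function u(x) = 3x² − 1 is a solution of the weakly singular Fredholm integral equation u(x) − ∫_0^1 ln|x − t|·u(t) dt = f(x) on (0,1) with right-hand side f(x) = (x³ − x)·ln((1 − x)/x) + 4x² + x/2 − 5/3. -/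
open MeasureTheory

lemma continuous_mul_log_abs : Continuous fun s : ℝ => s * Real.log |s| := by
  rw [continuous_iff_continuousAt]
  intro a
  rcases eq_or_ne a 0 with h | h
  · subst h
    have h0 : Filter.Tendsto (fun s : ℝ => s * Real.log |s|) (nhds 0) (nhds 0) := by
      apply squeeze_zero_norm (a := fun s : ℝ => abs (abs s * Real.log (abs s)))
      · intro s
        simp [Real.norm_eq_abs, abs_mul]
      · have h1 : Continuous fun s : ℝ => abs (abs s * Real.log (abs s)) :=
          (Real.continuous_mul_log.comp continuous_abs).abs
        simpa using h1.tendsto 0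
    simpa [ContinuousAt] using h0
  · exact continuousAt_id.mul
      ((Real.continuousAt_log (abs_ne_zero.2 h)).comp continuous_abs.continuousAt)

/-- Integrability of `t ↦ log |x - t|` on `[0, x]` for `0 < x < 1`. -/
lemma intervalIntegrable_log_abs_sub_left {x : ℝ} (hx0 : 0 < x) (hx1 : x < 1) :
    IntervalIntegrable (fun t => Real.log |x - t|) volume 0 x := by
  rw [intervalIntegrable_iff_integrableOn_Ioc_of_le hx0.le]
  have key : IntegrableOn (fun t => -Real.log (x - t)) (Set.Ioc 0 x) volume := by
    apply intervalIntegral.integrableOn_deriv_of_nonneg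
      (g := fun t => (x - t) * Real.log (x - t) - (x - t))
    · exact ((Real.continuous_mul_log.comp (continuous_const.sub continuous_id)).sub
        (continuous_const.sub continuous_id)).continuousOn
    · intro t ht
      have hs : x - t ≠ 0 := ne_of_gt (by linarith [ht.2])
      have h1 : HasDerivAt (fun t : ℝ => x - t) (-1) t := by
        simpa using (hasDerivAt_id t).const_sub x
      have hl : HasDerivAt (fun t : ℝ => Real.log (x - t)) (-1 / (x - t)) t := h1.log hs
      have h2 := (h1.mul hl).sub h1
      refine h2.congr_deriv ?_
      field_simp
      ring
    · intro t ht
      have h1 : 0 < x - t := by linarith [ht.2]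
      have h2 : x - t < 1 := by linarith [ht.1]
      have := Real.log_neg h1 h2
      linarith
  have key2 : IntegrableOn (fun t => Real.log (x - t)) (Set.Ioc 0 x) volume := by
    have h : IntegrableOn (-(fun t => -Real.log (x - t))) (Set.Ioc 0 x) volume := key.neg
    refine h.congr_fun (fun t _ => ?_) measurableSet_Ioc
    simp
  refine key2.congr_fun (fun t ht => ?_) measurableSet_Ioc
  show Real.log (x - t) = Real.log |x - t|
  rw [abs_of_nonneg (by linarith [ht.2] : (0:ℝ) ≤ x - t)]

/-- Integrability of `t ↦ log |x - t|` on `[x, 1]` for `0 < x < 1`. -/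
lemma intervalIntegrable_log_abs_sub_right {x : ℝ} (hx0 : 0 < x) (hx1 : x < 1) :
    IntervalIntegrable (fun t => Real.log |x - t|) volume x 1 := by
  rw [intervalIntegrable_iff_integrableOn_Ioc_of_le hx1.le]
  have key : IntegrableOn (fun t => -Real.log (t - x)) (Set.Ioc x 1) volume := by
    apply intervalIntegral.integrableOn_deriv_of_nonneg
      (g := fun t => (t - x) - (t - x) * Real.log (t - x))
    · exact ((continuous_id.sub continuous_const).sub
        (Real.continuous_mul_log.comp (continuous_id.sub continuous_const))).continuousOn
    · intro t ht
      have hs : t - x ≠ 0 := ne_of_gt (by linarith [ht.1])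
      have h1 : HasDerivAt (fun t : ℝ => t - x) 1 t := (hasDerivAt_id t).sub_const x
      have hl : HasDerivAt (fun t : ℝ => Real.log (t - x)) (1 / (t - x)) t := h1.log hs
      have h2 := h1.sub (h1.mul hl)
      refine h2.congr_deriv ?_
      field_simp
      ring
    · intro t ht
      have h1 : 0 < t - x := by linarith [ht.1]
      have h2 : t - x < 1 := by linarith [ht.2]
      have := Real.log_neg h1 h2
      linarith
  have key2 : IntegrableOn (fun t => Real.log (t - x)) (Set.Ioc x 1) volume := by
    have h : IntegrableOn (-(fun t => -Real.log (t - x))) (Set.Ioc x 1) volume := key.neg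
    refine h.congr_fun (fun t _ => ?_) measurableSet_Ioc
    simp
  refine key2.congr_fun (fun t ht => ?_) measurableSet_Ioc
  show Real.log (t - x) = Real.log |x - t|
  rw [abs_sub_comm, abs_of_nonneg (by linarith [ht.1] : (0:ℝ) ≤ t - x)]

/-- For every `x ∈ (0, 1)`, `∫_0^1 ln|x − t|(3t² − 1) dt` exists and equals
`−(x³ − x) ln((1 − x)/x) − x² − x/2 + 2/3`; consequently `u(x) = 3x² − 1` solves the
weakly singular Fredholm integral equation `u(x) − ∫_0^1 ln|x − t| u(t) dt = f(x)` with
`f(x) = (x³ − x) ln((1 − x)/x) + 4x² + x/2 − 5/3`. -/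
theorem log_kernel_integral_legendre (x : ℝ) (hx : x ∈ Set.Ioo (0 : ℝ) 1) :
    IntegrableOn (fun t => Real.log |x - t| * (3 * t ^ 2 - 1)) (Set.Ioc 0 1) volume ∧
    (∫ t in (0 : ℝ)..1, Real.log |x - t| * (3 * t ^ 2 - 1)) =
      -(x ^ 3 - x) * Real.log ((1 - x) / x) - x ^ 2 - x / 2 + 2 / 3 ∧
    (fun y : ℝ => 3 * y ^ 2 - 1) x -
        (∫ t in (0 : ℝ)..1, Real.log |x - t| * (fun y : ℝ => 3 * y ^ 2 - 1) t) =
      (x ^ 3 - x) * Real.log ((1 - x) / x) + 4 * x ^ 2 + x / 2 - 5 / 3 := by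
  obtain ⟨hx0, hx1⟩ := hx
  have hgc : ContinuousOn (fun t : ℝ => 3 * t ^ 2 - 1) (Set.uIcc (0:ℝ) x) :=
    (by continuity : Continuous fun t : ℝ => 3 * t ^ 2 - 1).continuousOn
  have hgc' : ContinuousOn (fun t : ℝ => 3 * t ^ 2 - 1) (Set.uIcc x (1:ℝ)) :=
    (by continuity : Continuous fun t : ℝ => 3 * t ^ 2 - 1).continuousOn
  have hint1 : IntervalIntegrable (fun t => Real.log |x - t| * (3 * t ^ 2 - 1)) volume 0 x :=
    (intervalIntegrable_log_abs_sub_left hx0 hx1).mul_continuousOn hgc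
  have hint2 : IntervalIntegrable (fun t => Real.log |x - t| * (3 * t ^ 2 - 1)) volume x 1 :=
    (intervalIntegrable_log_abs_sub_right hx0 hx1).mul_continuousOn hgc'
  have hint : IntervalIntegrable (fun t => Real.log |x - t| * (3 * t ^ 2 - 1)) volume 0 1 :=
    hint1.trans hint2
  -- the antiderivative
  set F : ℝ → ℝ := fun t =>
    (t ^ 3 - t - (x ^ 3 - x)) * Real.log |t - x| -
      (t ^ 3 / 3 + x * t ^ 2 / 2 + (x ^ 2 - 1) * t) with hF
  have hFcont : Continuous F := by
    have hFeq : F = fun t =>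
        ((t - x) * Real.log |t - x|) * (t ^ 2 + t * x + x ^ 2 - 1) -
          (t ^ 3 / 3 + x * t ^ 2 / 2 + (x ^ 2 - 1) * t) := by
      funext t
      rw [hF]
      ring
    rw [hFeq]
    exact (((continuous_mul_log_abs.comp (continuous_id.sub continuous_const)).mul
      (by continuity)).sub (by continuity))
  have hFderiv : ∀ t : ℝ, t ≠ x →
      HasDerivAt F (Real.log |x - t| * (3 * t ^ 2 - 1)) t := by
    intro t ht
    have hs : t - x ≠ 0 := sub_ne_zero.2 ht
    have h1 : HasDerivAt (fun t : ℝ => t - x) 1 t := (hasDerivAt_id t).sub_const x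
    have hl : HasDerivAt (fun t : ℝ => Real.log (t - x)) (1 / (t - x)) t := h1.log hs
    have hP : HasDerivAt (fun t : ℝ => t ^ 3 - t - (x ^ 3 - x)) (3 * t ^ 2 - 1) t := by
      have := ((hasDerivAt_pow 3 t).sub (hasDerivAt_id t)).sub_const (x ^ 3 - x)
      simpa using this
    have hQ : HasDerivAt (fun t : ℝ => t ^ 3 / 3 + x * t ^ 2 / 2 + (x ^ 2 - 1) * t)
        (t ^ 2 + x * t + (x ^ 2 - 1)) t := by
      have h3 : HasDerivAt (fun t : ℝ => t ^ 3 / 3) (t ^ 2) t := by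
        simpa using (hasDerivAt_pow 3 t).div_const 3
      have h4 : HasDerivAt (fun t : ℝ => x * t ^ 2 / 2) (x * t) t := by
        have := ((hasDerivAt_pow 2 t).const_mul x).div_const 2
        refine this.congr_deriv ?_
        norm_num
        ring
      have h5 : HasDerivAt (fun t : ℝ => (x ^ 2 - 1) * t) (x ^ 2 - 1) t := by
        simpa using (hasDerivAt_id t).const_mul (x ^ 2 - 1)
      exact (h3.add h4).add h5
    have hFeq : F = fun t : ℝ =>
        (t ^ 3 - t - (x ^ 3 - x)) * Real.log (t - x) -
          (t ^ 3 / 3 + x * t ^ 2 / 2 + (x ^ 2 - 1) * t) := by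
      funext s
      rw [hF]
      simp only [Real.log_abs]
    rw [hFeq]
    have h2 := (hP.mul hl).sub hQ
    refine h2.congr_deriv ?_
    rw [abs_sub_comm, Real.log_abs]
    field_simp
    ring
  have key : ∀ a b : ℝ, a ≤ b → (∀ t ∈ Set.Ioo a b, t ≠ x) →
      IntervalIntegrable (fun t => Real.log |x - t| * (3 * t ^ 2 - 1)) volume a b →
      (∫ t in a..b, Real.log |x - t| * (3 * t ^ 2 - 1)) = F b - F a := by
    intro a b hab hne hii
    exact intervalIntegral.integral_eq_sub_of_hasDeriv_right_of_le hab
      hFcont.continuousOn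
      (fun t ht => (hFderiv t (hne t ht)).hasDerivWithinAt) hii
  have I1 : (∫ t in (0:ℝ)..x, Real.log |x - t| * (3 * t ^ 2 - 1)) = F x - F 0 :=
    key 0 x hx0.le (fun t ht => ne_of_lt ht.2) hint1
  have I2 : (∫ t in x..(1:ℝ), Real.log |x - t| * (3 * t ^ 2 - 1)) = F 1 - F x :=
    key x 1 hx1.le (fun t ht => ne_of_gt ht.1) hint2
  have Itot : (∫ t in (0:ℝ)..1, Real.log |x - t| * (3 * t ^ 2 - 1)) = F 1 - F 0 := by
    rw [← intervalIntegral.integral_add_adjacent_intervals hint1 hint2, I1, I2]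
    ring
  have hlogx : Real.log |(0:ℝ) - x| = Real.log x := by
    rw [abs_sub_comm, sub_zero, abs_of_pos hx0]
  have hlog1 : Real.log |(1:ℝ) - x| = Real.log (1 - x) := by
    rw [abs_of_pos (by linarith)]
  have hlogdiv : Real.log ((1 - x) / x) = Real.log (1 - x) - Real.log x :=
    Real.log_div (by linarith) (ne_of_gt hx0)
  have Ival : (∫ t in (0:ℝ)..1, Real.log |x - t| * (3 * t ^ 2 - 1)) =
      -(x ^ 3 - x) * Real.log ((1 - x) / x) - x ^ 2 - x / 2 + 2 / 3 := by
    rw [Itot, hF]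
    simp only [hlogx, hlog1, hlogdiv]
    ring
  refine ⟨(intervalIntegrable_iff_integrableOn_Ioc_of_le zero_le_one).mp hint, Ival, ?_⟩
  simp only [Ival]
  ring
end
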